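/- arXiv:2004.06514 — 2 statements merged into one kernel-verified Lean document; each statement's English description precedes it below -/
import Mathlib

section
/- Suppose f_n, f : [0,τ] → ℝ are measurable, f_n(u) → f(u) in probability for each u ∈ [0,τ], and there is an integrable function k : [0,τ] → ℝ with |f_n(u)| ≤ k(u) and |f(u)| ≤ k(u) almost surely for all u, n. Then sup_{t∈[0,τ]} |∫₀ᵗ f_n(u) du − ∫₀ᵗ f(u) du| → 0 in probability (dominated convergence for convergence in probability, uniformly in the upper limit). -/
open MeasureTheory ProbabilityTheory Filter Set
open scoped ENNReal


section
variable {Ω : Type*} {m0 : MeasurableSpace Ω} {μ : Measure Ω} [IsProbabilityMeasure μ]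

lemma aux_lintegral_tendsto_zero (F : ℕ → Ω → ℝ) (hFmeas : ∀ n, Measurable (F n))
    (c : ℝ)
    (hbd : ∀ n, ∀ᵐ ω ∂μ, |F n ω| ≤ c)
    (hprob : ∀ ε > (0:ℝ), Tendsto (fun n => μ {ω | ε < |F n ω|}) atTop (nhds 0)) :
    Tendsto (fun n => ∫⁻ ω, ‖F n ω‖₊ ∂μ) atTop (nhds 0) := by
  rw [ENNReal.tendsto_nhds_zero]
  intro ε hε
  set ε' : ℝ≥0∞ := min ε 1 with hε'def
  have hε'pos : 0 < ε' := lt_min hε zero_lt_one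
  have hε'top : ε' ≠ ⊤ := ne_top_of_le_ne_top ENNReal.one_ne_top (min_le_right _ _)
  set δ : ℝ := (ε' / 2).toReal with hδdef
  have hδpos : 0 < δ := ENNReal.toReal_pos (by simp [ENNReal.div_eq_zero_iff, hε'pos.ne']) (ENNReal.div_lt_top hε'top (by norm_num)).ne
  set c' : ℝ≥0∞ := ENNReal.ofReal c with hc'def
  have hc'top : c' + 1 ≠ ⊤ := by simp [hc'def]
  have hc'0 : c' + 1 ≠ 0 := by simp
  set r : ℝ≥0∞ := (ε' / 2) / (c' + 1) with hrdef
  have hrpos : 0 < r := ENNReal.div_pos (by simp [ENNReal.div_eq_zero_iff, hε'pos.ne', hε'top]) hc'top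
  have hev : ∀ᶠ n in atTop, μ {ω | δ < |F n ω|} ≤ r :=
    (ENNReal.tendsto_nhds_zero.mp (hprob δ hδpos)) r hrpos
  filter_upwards [hev] with n hn
  have hmeasset : MeasurableSet {ω | δ < |F n ω|} :=
    measurableSet_lt measurable_const (hFmeas n).abs
  have hpt : ∀ᵐ ω ∂μ, (‖F n ω‖₊ : ℝ≥0∞) ≤
      ENNReal.ofReal δ + Set.indicator {ω | δ < |F n ω|} (fun _ => c') ω := by
    filter_upwards [hbd n] with ω hω
    by_cases h : δ < |F n ω|
    · have : (‖F n ω‖₊ : ℝ≥0∞) ≤ c' := by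
        rw [← enorm_eq_nnnorm, ← ofReal_norm]
        exact ENNReal.ofReal_le_ofReal (by simpa [Real.norm_eq_abs] using hω)
      calc (‖F n ω‖₊ : ℝ≥0∞) ≤ c' := this
        _ ≤ _ := by
            rw [Set.indicator_of_mem (show ω ∈ {ω | δ < |F n ω|} from h)]
            exact le_add_self
    · have : (‖F n ω‖₊ : ℝ≥0∞) ≤ ENNReal.ofReal δ := by
        rw [← enorm_eq_nnnorm, ← ofReal_norm]
        exact ENNReal.ofReal_le_ofReal (by simpa [Real.norm_eq_abs] using not_lt.mp h)
      exact le_add_right this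
  calc ∫⁻ ω, ‖F n ω‖₊ ∂μ
      ≤ ∫⁻ ω, (ENNReal.ofReal δ + Set.indicator {ω | δ < |F n ω|} (fun _ => c') ω) ∂μ :=
        lintegral_mono_ae hpt
    _ = ENNReal.ofReal δ * μ Set.univ + c' * μ {ω | δ < |F n ω|} := by
        rw [lintegral_add_left measurable_const, lintegral_const,
          lintegral_indicator_const hmeasset]
    _ ≤ ε' / 2 + c' * r := by
        gcongr
        · rw [hδdef, ENNReal.ofReal_toReal (ENNReal.div_lt_top hε'top (by norm_num)).ne,
            measure_univ, mul_one]
    _ ≤ ε' / 2 + (c' + 1) * r := by gcongr; exact le_add_right le_rfl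
    _ = ε' / 2 + ε' / 2 := by rw [hrdef, ENNReal.mul_div_cancel hc'0 hc'top]
    _ = ε' := ENNReal.add_halves ε'
    _ ≤ ε := min_le_left _ _

private theorem gill_aux
    (τ : ℝ) (hτ : 0 ≤ τ)
    (f : ℕ → ℝ → Ω → ℝ) (g : ℝ → Ω → ℝ) (k : ℝ → ℝ)
    (hfmeas : ∀ n, Measurable (Function.uncurry (f n)))
    (hgmeas : Measurable (Function.uncurry g))
    (hkint : IntegrableOn k (Set.Icc 0 τ))
    (hbound : ∀ n : ℕ, ∀ u ∈ Set.Icc (0:ℝ) τ,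
      ∀ᵐ ω ∂μ, |f n u ω| ≤ k u ∧ |g u ω| ≤ k u)
    (hptwise : ∀ u ∈ Set.Icc (0:ℝ) τ, ∀ ε > (0:ℝ),
      Tendsto (fun n => μ {ω | ε < |f n u ω - g u ω|}) atTop (nhds 0)) :
    ∀ ε > (0:ℝ),
      Tendsto (fun n => μ {ω | ∃ t ∈ Set.Icc (0:ℝ) τ,
          ε < |(∫ u in (0:ℝ)..t, f n u ω) - ∫ u in (0:ℝ)..t, g u ω|})
        atTop (nhds 0) := by
  intro ε hε
  set ν : Measure ℝ := volume.restrict (Set.Icc 0 τ) with hνdef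
  -- measurable sections
  have hfa : ∀ n ω, Measurable (fun u => f n u ω) := fun n ω =>
    (hfmeas n).comp (measurable_id.prodMk measurable_const)
  have hga : ∀ ω, Measurable (fun u => g u ω) :=
    fun ω => hgmeas.comp (measurable_id.prodMk measurable_const)
  have hfω : ∀ n u, Measurable (fun ω => f n u ω) := fun n u =>
    (hfmeas n).comp (measurable_const.prodMk measurable_id)
  have hgω : ∀ u, Measurable (fun ω => g u ω) := fun u =>
    hgmeas.comp (measurable_const.prodMk measurable_id)
  -- measurable version of k
  obtain ⟨k', hk'sm, hkk'⟩ := hkint.1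
  have hk'meas : Measurable k' := hk'sm.measurable
  -- a.e. swap: for a.e. ω, domination holds for a.e. u
  have key : ∀ n, ∀ᵐ ω ∂μ, ∀ᵐ u ∂ν, |f n u ω| ≤ k u ∧ |g u ω| ≤ k u := by
    intro n
    set s : Set (ℝ × Ω) :=
      {p | ¬ (|f n p.1 p.2| ≤ k' p.1 ∧ |g p.1 p.2| ≤ k' p.1)} with hsdef
    have hs_meas : MeasurableSet s := by
      apply MeasurableSet.compl
      exact (measurableSet_le (hfmeas n).abs (hk'meas.comp measurable_fst)).inter
        (measurableSet_le hgmeas.abs (hk'meas.comp measurable_fst))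
    have hprodnull : (ν.prod μ) s = 0 := by
      rw [Measure.measure_prod_null hs_meas]
      filter_upwards [hkk', ae_restrict_mem measurableSet_Icc] with u hku hu
      have h2 : ∀ᵐ ω ∂μ, |f n u ω| ≤ k' u ∧ |g u ω| ≤ k' u := by
        filter_upwards [hbound n u hu] with ω h
        rwa [← hku]
      have h4 := ae_iff.mp h2
      have hpre : Prod.mk u ⁻¹' s = {ω | ¬ (|f n u ω| ≤ k' u ∧ |g u ω| ≤ k' u)} := rfl
      simp only [Pi.zero_apply]
      rw [hpre]
      exact h4
    have hswapnull : (μ.prod ν) (Prod.swap ⁻¹' s) = 0 := by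
      rw [← Measure.prod_swap, Measure.map_apply measurable_swap
        (hs_meas.preimage measurable_swap)]
      have : Prod.swap ⁻¹' (Prod.swap ⁻¹' s) = s := by
        ext p; simp
      rw [this, hprodnull]
    have hae : ∀ᵐ p : Ω × ℝ ∂(μ.prod ν), ¬ ((p.2, p.1) ∈ s) := by
      rw [ae_iff]
      simpa [Set.preimage, Prod.swap] using hswapnull
    have h3 := Measure.ae_ae_of_ae_prod hae
    filter_upwards [h3] with ω hω
    filter_upwards [hω, hkk'] with u h1 h2
    rw [hsdef] at h1
    simp only [Set.mem_setOf_eq, not_not] at h1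
    rwa [h2]
  -- the dominating ω-wise quantity
  set Y : ℕ → Ω → ℝ≥0∞ := fun n ω => ∫⁻ u, (‖f n u ω - g u ω‖₊ : ℝ≥0∞) ∂ν with hYdef
  have hYmeas : ∀ n, Measurable (Y n) := by
    intro n
    apply Measurable.lintegral_prod_right (f := fun ω u => (‖f n u ω - g u ω‖₊ : ℝ≥0∞))
    exact (((hfmeas n).comp measurable_swap).sub (hgmeas.comp measurable_swap)).enorm
  -- Tonelli
  have hswap : ∀ n, ∫⁻ ω, Y n ω ∂μ = ∫⁻ u, (∫⁻ ω, (‖f n u ω - g u ω‖₊ : ℝ≥0∞) ∂μ) ∂ν := by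
    intro n
    exact lintegral_lintegral_swap
      ((((hfmeas n).comp measurable_swap).sub (hgmeas.comp measurable_swap)).enorm).aemeasurable
  -- per-u tendsto
  have hperu : ∀ u ∈ Set.Icc (0:ℝ) τ,
      Tendsto (fun n => ∫⁻ ω, (‖f n u ω - g u ω‖₊ : ℝ≥0∞) ∂μ) atTop (nhds 0) := by
    intro u hu
    apply aux_lintegral_tendsto_zero (fun n ω => f n u ω - g u ω)
      (fun n => (hfω n u).sub (hgω u)) (2 * k u)
    · intro n
      filter_upwards [hbound n u hu] with ω hω
      calc |f n u ω - g u ω| ≤ |f n u ω| + |g u ω| := abs_sub _ _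
        _ ≤ k u + k u := add_le_add hω.1 hω.2
        _ = 2 * k u := by ring
    · exact hptwise u hu
  -- dominated convergence in u
  have hFmeas : ∀ n, Measurable (fun u => ∫⁻ ω, (‖f n u ω - g u ω‖₊ : ℝ≥0∞) ∂μ) := by
    intro n
    apply Measurable.lintegral_prod_right (f := fun u ω => (‖f n u ω - g u ω‖₊ : ℝ≥0∞))
    exact ((hfmeas n).sub hgmeas).enorm
  have hTend : Tendsto (fun n => ∫⁻ u, (∫⁻ ω, (‖f n u ω - g u ω‖₊ : ℝ≥0∞) ∂μ) ∂ν)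
      atTop (nhds 0) := by
    have := tendsto_lintegral_of_dominated_convergence (μ := ν)
      (F := fun n u => ∫⁻ ω, (‖f n u ω - g u ω‖₊ : ℝ≥0∞) ∂μ) (f := fun _ => 0)
      (fun u => ENNReal.ofReal (2 * k' u)) hFmeas ?_ ?_ ?_
    · simpa using this
    · intro n
      filter_upwards [hkk', ae_restrict_mem measurableSet_Icc] with u hku hu
      have hpt : ∀ᵐ ω ∂μ, (‖f n u ω - g u ω‖₊ : ℝ≥0∞) ≤ ENNReal.ofReal (2 * k u) := by
        filter_upwards [hbound n u hu] with ω hω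
        rw [← enorm_eq_nnnorm, ← ofReal_norm]
        apply ENNReal.ofReal_le_ofReal
        calc ‖f n u ω - g u ω‖ ≤ |f n u ω| + |g u ω| := abs_sub _ _
          _ ≤ k u + k u := add_le_add hω.1 hω.2
          _ = 2 * k u := by ring
      calc ∫⁻ ω, (‖f n u ω - g u ω‖₊ : ℝ≥0∞) ∂μ
          ≤ ∫⁻ _, ENNReal.ofReal (2 * k u) ∂μ := lintegral_mono_ae hpt
        _ = ENNReal.ofReal (2 * k u) := by simp
        _ = ENNReal.ofReal (2 * k' u) := by rw [hku]
    · have heq : ∫⁻ u, ENNReal.ofReal (2 * k' u) ∂ν = ∫⁻ u, ENNReal.ofReal (2 * k u) ∂ν := by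
        apply lintegral_congr_ae
        filter_upwards [hkk'] with u hku
        rw [hku]
      rw [heq]
      have hle : ∀ u, ENNReal.ofReal (2 * k u) ≤ 2 * (‖k u‖₊ : ℝ≥0∞) := by
        intro u
        rw [ENNReal.ofReal_mul (by norm_num)]
        gcongr
        · norm_num
        · exact Real.ofReal_le_enorm _
      have hfin : ∫⁻ u, ENNReal.ofReal (2 * k u) ∂ν < ⊤ := by
        calc ∫⁻ u, ENNReal.ofReal (2 * k u) ∂ν ≤ ∫⁻ u, 2 * (‖k u‖₊ : ℝ≥0∞) ∂ν :=
            lintegral_mono hle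
          _ = 2 * ∫⁻ u, (‖k u‖₊ : ℝ≥0∞) ∂ν := lintegral_const_mul' 2 _ (by norm_num)
          _ < ⊤ := ENNReal.mul_lt_top (by norm_num) hkint.2
      exact hfin.ne
    · filter_upwards [ae_restrict_mem measurableSet_Icc] with u hu
      exact hperu u hu
  -- pointwise implication: bad event forces large Y
  have hbadsub : ∀ n ω, (∀ᵐ u ∂ν, |f n u ω| ≤ k u ∧ |g u ω| ≤ k u) →
      (∃ t ∈ Set.Icc (0:ℝ) τ,
        ε < |(∫ u in (0:ℝ)..t, f n u ω) - ∫ u in (0:ℝ)..t, g u ω|) →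
      ENNReal.ofReal ε ≤ Y n ω := by
    intro n ω hω ⟨t, ht, hεt⟩
    have hfi : IntegrableOn (fun u => f n u ω) (Set.Icc 0 τ) := by
      apply Integrable.mono' hkint (hfa n ω).aestronglyMeasurable
      filter_upwards [hω] with u hu
      simpa [Real.norm_eq_abs] using hu.1
    have hgi : IntegrableOn (fun u => g u ω) (Set.Icc 0 τ) := by
      apply Integrable.mono' hkint (hga ω).aestronglyMeasurable
      filter_upwards [hω] with u hu
      simpa [Real.norm_eq_abs] using hu.2
    have hsub : Set.Ioc (0:ℝ) t ⊆ Set.Icc 0 τ :=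
      fun u hu => ⟨le_of_lt hu.1, hu.2.trans ht.2⟩
    have hfint : IntervalIntegrable (fun u => f n u ω) volume 0 t :=
      (intervalIntegrable_iff_integrableOn_Ioc_of_le ht.1).mpr (hfi.mono_set hsub)
    have hgint : IntervalIntegrable (fun u => g u ω) volume 0 t :=
      (intervalIntegrable_iff_integrableOn_Ioc_of_le ht.1).mpr (hgi.mono_set hsub)
    rw [← intervalIntegral.integral_sub hfint hgint,
      intervalIntegral.integral_of_le ht.1] at hεt
    have hhi : IntegrableOn (fun u => f n u ω - g u ω) (Set.Icc 0 τ) := hfi.sub hgi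
    have h1 : |∫ u in Set.Ioc (0:ℝ) t, (f n u ω - g u ω)|
        ≤ ∫ u in Set.Ioc (0:ℝ) t, |f n u ω - g u ω| := by
      simpa [Real.norm_eq_abs] using
        norm_integral_le_integral_norm (μ := volume.restrict (Set.Ioc 0 t))
          (fun u => f n u ω - g u ω)
    have h2 : ∫ u in Set.Ioc (0:ℝ) t, |f n u ω - g u ω|
        ≤ ∫ u in Set.Icc (0:ℝ) τ, |f n u ω - g u ω| :=
      setIntegral_mono_set hhi.abs
        (Eventually.of_forall fun u => abs_nonneg _) (HasSubset.Subset.eventuallyLE hsub)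
    have h3 : ENNReal.ofReal (∫ u in Set.Icc (0:ℝ) τ, |f n u ω - g u ω|) = Y n ω := by
      have := ofReal_integral_norm_eq_lintegral_enorm hhi
      simp only [Real.norm_eq_abs] at this
      exact this
    rw [← h3]
    exact ENNReal.ofReal_le_ofReal (le_trans (le_of_lt hεt) (le_trans h1 h2))
  -- Markov bound and squeeze
  have hmark : ∀ n, μ {ω | ∃ t ∈ Set.Icc (0:ℝ) τ,
      ε < |(∫ u in (0:ℝ)..t, f n u ω) - ∫ u in (0:ℝ)..t, g u ω|}
      ≤ (∫⁻ ω, Y n ω ∂μ) / ENNReal.ofReal ε := by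
    intro n
    have hN : μ {ω | ¬ (∀ᵐ u ∂ν, |f n u ω| ≤ k u ∧ |g u ω| ≤ k u)} = 0 := ae_iff.mp (key n)
    have hsub2 : {ω | ∃ t ∈ Set.Icc (0:ℝ) τ,
        ε < |(∫ u in (0:ℝ)..t, f n u ω) - ∫ u in (0:ℝ)..t, g u ω|}
        ⊆ {ω | ENNReal.ofReal ε ≤ Y n ω}
          ∪ {ω | ¬ (∀ᵐ u ∂ν, |f n u ω| ≤ k u ∧ |g u ω| ≤ k u)} := by
      intro ω hωmem
      by_cases h : ∀ᵐ u ∂ν, |f n u ω| ≤ k u ∧ |g u ω| ≤ k u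
      · exact Or.inl (hbadsub n ω h hωmem)
      · exact Or.inr h
    calc μ _ ≤ μ ({ω | ENNReal.ofReal ε ≤ Y n ω}
          ∪ {ω | ¬ (∀ᵐ u ∂ν, |f n u ω| ≤ k u ∧ |g u ω| ≤ k u)}) := measure_mono hsub2
      _ ≤ μ {ω | ENNReal.ofReal ε ≤ Y n ω}
          + μ {ω | ¬ (∀ᵐ u ∂ν, |f n u ω| ≤ k u ∧ |g u ω| ≤ k u)} := measure_union_le _ _
      _ = μ {ω | ENNReal.ofReal ε ≤ Y n ω} := by rw [hN, add_zero]
      _ ≤ (∫⁻ ω, Y n ω ∂μ) / ENNReal.ofReal ε :=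
        meas_ge_le_lintegral_div (hYmeas n).aemeasurable
          (ENNReal.ofReal_pos.mpr hε).ne' ENNReal.ofReal_ne_top
  have hdiv : Tendsto (fun n => (∫⁻ ω, Y n ω ∂μ) / ENNReal.ofReal ε) atTop (nhds 0) := by
    have h0 : Tendsto (fun n => ∫⁻ ω, Y n ω ∂μ) atTop (nhds 0) := by
      simp_rw [hswap]
      exact hTend
    have := ENNReal.Tendsto.mul_const (b := (ENNReal.ofReal ε)⁻¹) h0
      (Or.inr (ENNReal.inv_ne_top.mpr (ENNReal.ofReal_pos.mpr hε).ne'))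
    simpa [div_eq_mul_inv] using this
  exact tendsto_of_tendsto_of_tendsto_of_le_of_le tendsto_const_nhds hdiv
    (fun n => zero_le) hmark

end

/-- Gill's dominated convergence theorem for convergence in probability, uniformly in the
upper integration limit: if `f n u → g u` in probability for each `u ∈ [0,τ]` and all the
processes are dominated by a deterministic integrable function `k`, then
`sup_{t∈[0,τ]} |∫₀ᵗ f n − ∫₀ᵗ g| → 0` in probability. -/
theorem gill_dominated_convergence_in_probability
    {Ω : Type*} {m0 : MeasurableSpace Ω} {μ : Measure Ω} [IsProbabilityMeasure μ]
    (τ : ℝ) (hτ : 0 ≤ τ)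
    (f : ℕ → ℝ → Ω → ℝ) (g : ℝ → Ω → ℝ) (k : ℝ → ℝ)
    (hfmeas : ∀ n, Measurable (Function.uncurry (f n)))
    (hgmeas : Measurable (Function.uncurry g))
    (hkint : IntegrableOn k (Set.Icc 0 τ))
    (hbound : ∀ n : ℕ, ∀ u ∈ Set.Icc (0:ℝ) τ,
      ∀ᵐ ω ∂μ, |f n u ω| ≤ k u ∧ |g u ω| ≤ k u)
    (hptwise : ∀ u ∈ Set.Icc (0:ℝ) τ, ∀ ε > (0:ℝ),
      Tendsto (fun n => μ {ω | ε < |f n u ω - g u ω|}) atTop (nhds 0)) :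
    ∀ ε > (0:ℝ),
      Tendsto (fun n => μ {ω | ∃ t ∈ Set.Icc (0:ℝ) τ,
          ε < |(∫ u in (0:ℝ)..t, f n u ω) - ∫ u in (0:ℝ)..t, g u ω|})
        atTop (nhds 0) :=
  gill_aux τ hτ f g k hfmeas hgmeas hkint hbound hptwise
end

section
/- Let X be a multi-state trajectory, L a left-truncation time and C a censoring time with (L,C) independent of X, and let Q denote the conditional law given study entry. If the state l is transient and u > 0, then Q(dN(u)=1 | Y(u)=1) = P(X(u+du)=m | X(u−)=l), i.e., the conditional rate of an observed l→m transition given being under observation and in state l at time u equals the partly conditional transition rate α_{lm}(u)du. -/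
open MeasureTheory ProbabilityTheory Filter Set

/-- Under random left-truncation by `L` and right-censoring by `C` (with `(L,C)`
independent of the multi-state process `X`), the conditional rate of an observed
`l → m` transition given being under observation and in the transient state `l` just
before time `u` equals the partly conditional transition rate `α_{lm}(u)`:
`Q(dN(u)=1 | Y(u)=1) = P(X(u+du)=m | X(u−)=l)`.  Because the at-risk event is contained
in the study-entry event `Z`, conditioning under `Q = P(·|Z)` reduces to conditioning
under `P`, and the statement is rendered as equality of the limits of the conditional
probabilities divided by the bandwidth `h ↓ 0`. -/
theorem observed_rate_eq_partly_conditional_rate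
    {Ω : Type*} {m0 : MeasurableSpace Ω} (μ : Measure Ω) [IsProbabilityMeasure μ]
    {S : ℕ} (X Xm : ℝ → Ω → Fin (S + 1))
    (L C : Ω → ℝ) (Z : Set Ω)
    (u : ℝ) (hu : 0 < u)
    (l m : Fin (S + 1)) (hlm : l ≠ m)
    (hmeas : ∀ v, Measurable (X v))
    (hLC : Measurable fun ω => (L ω, C ω))
    -- Xm u is the left limit of v ↦ X v at u:
    (hXm : ∀ ω, ∃ ε > (0:ℝ), ∀ v ∈ Set.Ioo (u - ε) u, X v ω = Xm u ω)
    -- (L, C) is independent of the multi-state process: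
    (hindep : Indep (MeasurableSpace.comap (fun ω => (L ω, C ω)) inferInstance)
        (⨆ v : ℝ, MeasurableSpace.comap (X v) inferInstance) μ)
    -- state l is transient: being at risk in l at u implies study entry:
    (hsub : {ω | Xm u ω = l ∧ L ω < u ∧ u ≤ C ω} ⊆ Z)
    (hpos : μ {ω | Xm u ω = l ∧ L ω < u ∧ u ≤ C ω} ≠ 0)
    (hpos' : μ {ω | Xm u ω = l} ≠ 0)
    -- the censoring distribution has no atom at u:
    (hCcont : μ {ω | C ω = u} = 0)
    (α : ℝ)
    -- the partly conditional l → m transition rate at u exists and equals α: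
    (hα : Tendsto (fun h : ℝ =>
        (μ ({ω | X (u + h) ω = m} ∩ {ω | Xm u ω = l})).toReal
          / (μ {ω | Xm u ω = l}).toReal / h)
      (nhdsWithin 0 (Set.Ioi 0)) (nhds α)) :
    Tendsto (fun h : ℝ =>
        (μ ({ω | X (u + h) ω = m ∧ u + h ≤ C ω}
              ∩ {ω | Xm u ω = l ∧ L ω < u ∧ u ≤ C ω})).toReal
          / (μ {ω | Xm u ω = l ∧ L ω < u ∧ u ≤ C ω}).toReal / h)
      (nhdsWithin 0 (Set.Ioi 0)) (nhds α) := by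
    classical
  -- Notation
  set mLC : MeasurableSpace Ω := MeasurableSpace.comap (fun ω => (L ω, C ω)) inferInstance
  set mX : MeasurableSpace Ω := ⨆ v : ℝ, MeasurableSpace.comap (X v) inferInstance with hmXdef
  set D : Set Ω := {ω | Xm u ω = l} with hDdef
  set A : ℝ → Set Ω := fun h => {ω | X (u + h) ω = m} with hAdef
  set E : ℝ → Set Ω := fun h =>
    (fun ω => (L ω, C ω)) ⁻¹' {p : ℝ × ℝ | p.1 < u ∧ u + h ≤ p.2} with hEdef
  -- measurability of E h w.r.t. mLC
  have hEmeas : ∀ h : ℝ, MeasurableSet[mLC] (E h) := by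
    intro h
    exact ⟨{p : ℝ × ℝ | p.1 < u ∧ u + h ≤ p.2},
      (measurableSet_lt measurable_fst measurable_const).inter
        (measurableSet_le measurable_const measurable_snd), rfl⟩
  -- measurability of A h w.r.t. mX
  have hAmeas : ∀ h : ℝ, MeasurableSet[mX] (A h) := by
    intro h
    have : MeasurableSet[MeasurableSpace.comap (X (u + h)) inferInstance] (A h) :=
      ⟨{m}, measurableSet_singleton m, rfl⟩
    exact (le_iSup (fun v : ℝ => MeasurableSpace.comap (X v) inferInstance) (u + h)) _ this
  -- D expressed via rational times
  have hDeq : D = ⋃ n : ℕ, ⋂ q : ℚ, ⋂ _ : (q : ℝ) ∈ Set.Ioo (u - 1 / (n + 1)) u,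
      {ω | X q ω = l} := by
    ext ω
    simp only [hDdef, Set.mem_setOf_eq, Set.mem_iUnion, Set.mem_iInter]
    constructor
    · intro hω
      obtain ⟨ε, hε, hεp⟩ := hXm ω
      obtain ⟨n, hn⟩ := exists_nat_one_div_lt hε
      refine ⟨n, fun q hq => ?_⟩
      have : (q : ℝ) ∈ Set.Ioo (u - ε) u :=
        ⟨by have := hq.1; linarith, hq.2⟩
      rw [hεp _ this, hω]
    · rintro ⟨n, hn⟩
      obtain ⟨ε, hε, hεp⟩ := hXm ω
      have hδ : (0 : ℝ) < min ε (1 / (n + 1)) := by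
        apply lt_min hε
        positivity
      obtain ⟨q, hq1, hq2⟩ := exists_rat_btwn (show u - min ε (1 / (n + 1)) < u by linarith)
      have hq1' : u - ε < q := by
        have := min_le_left ε (1 / ((n : ℝ) + 1)); linarith
      have hq1'' : u - 1 / ((n : ℝ) + 1) < q := by
        have := min_le_right ε (1 / ((n : ℝ) + 1)); linarith
      have h1 := hn q ⟨hq1'', hq2⟩
      have h2 := hεp q ⟨hq1', hq2⟩
      rw [← h2, h1]
  have hDmeas : MeasurableSet[mX] D := by
    rw [hDeq]
    refine MeasurableSet.iUnion fun n => MeasurableSet.iInter fun q =>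
      MeasurableSet.iInter fun _ => ?_
    have : MeasurableSet[MeasurableSpace.comap (X q) inferInstance] {ω | X (q : ℝ) ω = l} :=
      ⟨{l}, measurableSet_singleton l, rfl⟩
    exact (le_iSup (fun v : ℝ => MeasurableSpace.comap (X v) inferInstance) (q : ℝ)) _ this
  -- independence in product form
  have hprod : ∀ s t, MeasurableSet[mLC] s → MeasurableSet[mX] t →
      μ (s ∩ t) = μ s * μ t := by
    intro s t hs ht
    exact (ProbabilityTheory.Indep_iff _ _ _).1 hindep s t hs ht
  -- the denominator set
  have hdenom : {ω | Xm u ω = l ∧ L ω < u ∧ u ≤ C ω} = E 0 ∩ D := by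
    ext ω
    simp only [hEdef, hDdef, Set.mem_inter_iff, Set.mem_setOf_eq, Set.mem_preimage, add_zero]
    tauto
  have hdenomμ : μ {ω | Xm u ω = l ∧ L ω < u ∧ u ≤ C ω} = μ (E 0) * μ D := by
    rw [hdenom, hprod _ _ (hEmeas 0) hDmeas]
  -- numerator sets, for h > 0
  have hnum : ∀ h : ℝ, 0 < h →
      ({ω | X (u + h) ω = m ∧ u + h ≤ C ω} ∩ {ω | Xm u ω = l ∧ L ω < u ∧ u ≤ C ω})
        = E h ∩ (A h ∩ D) := by
    intro h hh
    ext ω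
    simp only [hEdef, hAdef, hDdef, Set.mem_inter_iff, Set.mem_setOf_eq, Set.mem_preimage]
    constructor
    · rintro ⟨⟨h1, h2⟩, h3, h4, h5⟩
      exact ⟨⟨h4, h2⟩, h1, h3⟩
    · rintro ⟨⟨h1, h2⟩, h3, h4⟩
      exact ⟨⟨h3, h2⟩, h4, h1, by linarith⟩
  have hnumμ : ∀ h : ℝ, 0 < h →
      μ ({ω | X (u + h) ω = m ∧ u + h ≤ C ω} ∩ {ω | Xm u ω = l ∧ L ω < u ∧ u ≤ C ω})
        = μ (E h) * μ (A h ∩ D) := by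
    intro h hh
    rw [hnum h hh, hprod _ _ (hEmeas h) ((hAmeas h).inter hDmeas)]
  -- positivity facts
  have hD0 : (μ D).toReal ≠ 0 := by
    have h1 : μ D ≠ 0 := hpos'
    have h2 : μ D ≠ ⊤ := measure_ne_top μ D
    simp [ENNReal.toReal_eq_zero_iff, h1, h2]
  have hE0ne : μ (E 0) ≠ 0 := by
    intro hc
    apply hpos
    rw [hdenomμ, hc, zero_mul]
  have hE0top : μ (E 0) ≠ ⊤ := measure_ne_top μ _
  have hE0pos : (0 : ℝ) < (μ (E 0)).toReal := ENNReal.toReal_pos hE0ne hE0top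
  -- E is antitone in h
  have hEanti : ∀ ⦃h h' : ℝ⦄, h ≤ h' → E h' ⊆ E h := by
    intro h h' hh ω hω
    exact ⟨hω.1, le_trans (by linarith) hω.2⟩
  -- the union of E (1/(n+1)) has the same measure as E 0
  have hUnion : μ (⋃ n : ℕ, E (1 / (n + 1))) = μ (E 0) := by
    refine le_antisymm (measure_mono (Set.iUnion_subset fun n => hEanti (by positivity))) ?_
    have hsub' : E 0 ⊆ (⋃ n : ℕ, E (1 / (n + 1))) ∪ {ω | C ω = u} := by
      intro ω hω
      rcases eq_or_lt_of_le (by simpa using hω.2 : u ≤ C ω) with heq | hlt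
      · exact Or.inr heq.symm
      · obtain ⟨n, hn⟩ := exists_nat_one_div_lt (show (0:ℝ) < C ω - u by linarith)
        exact Or.inl (Set.mem_iUnion.2 ⟨n, hω.1, by push_cast at hn ⊢; linarith⟩)
    calc μ (E 0) ≤ μ ((⋃ n : ℕ, E (1 / (n + 1))) ∪ {ω | C ω = u}) := measure_mono hsub'
      _ ≤ μ (⋃ n : ℕ, E (1 / (n + 1))) + μ {ω | C ω = u} := measure_union_le _ _
      _ = μ (⋃ n : ℕ, E (1 / (n + 1))) := by rw [hCcont, add_zero]
  -- sequence tendsto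
  have hseq : Tendsto (fun n : ℕ => (μ (E (1 / (n + 1)))).toReal) atTop
      (nhds (μ (E 0)).toReal) := by
    have hmono : Monotone fun n : ℕ => E (1 / (n + 1)) := by
      intro n n' hnn
      apply hEanti
      apply one_div_le_one_div_of_le (by positivity)
      exact_mod_cast by exact_mod_cast add_le_add_left (Nat.cast_le.2 hnn) 1
    have := MeasureTheory.tendsto_measure_iUnion_atTop (μ := μ) hmono
    rw [hUnion] at this
    exact (ENNReal.tendsto_toReal hE0top).comp this
  -- e h := (μ (E h)).toReal tends to (μ (E 0)).toReal as h → 0+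
  have hetend : Tendsto (fun h : ℝ => (μ (E h)).toReal)
      (nhdsWithin 0 (Set.Ioi 0)) (nhds (μ (E 0)).toReal) := by
    rw [tendsto_order]
    constructor
    · intro a ha
      obtain ⟨n, hn⟩ := (hseq.eventually (eventually_gt_nhds ha)).exists
      filter_upwards [Ioo_mem_nhdsGT_of_mem
        (show (0:ℝ) ∈ Set.Ico (0:ℝ) (1 / (n + 1)) by constructor <;> first | rfl | positivity)]
        with h hh
      refine lt_of_lt_of_le hn ?_
      exact ENNReal.toReal_mono (measure_ne_top μ _) (measure_mono (hEanti hh.2.le))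
    · intro a ha
      filter_upwards [self_mem_nhdsWithin] with h hh
      refine lt_of_le_of_lt ?_ ha
      exact ENNReal.toReal_mono hE0top (measure_mono (hEanti (le_of_lt hh)))
  -- ratio of e tends to 1
  have hgtend : Tendsto (fun h : ℝ => (μ (E h)).toReal / (μ (E 0)).toReal)
      (nhdsWithin 0 (Set.Ioi 0)) (nhds 1) := by
    have := hetend.div_const (μ (E 0)).toReal
    rwa [div_self (ne_of_gt hE0pos)] at this
  -- combine
  have hmain : Tendsto (fun h : ℝ =>
      ((μ (E h)).toReal / (μ (E 0)).toReal) *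
        ((μ (A h ∩ D)).toReal / (μ D).toReal / h))
      (nhdsWithin 0 (Set.Ioi 0)) (nhds α) := by
    have := hgtend.mul hα
    rwa [one_mul] at this
  refine hmain.congr' ?_
  filter_upwards [self_mem_nhdsWithin] with h hh
  have hh' : (0:ℝ) < h := hh
  rw [hnumμ h hh', hdenomμ, ENNReal.toReal_mul, ENNReal.toReal_mul]
  ring
end
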